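/- arXiv:2211.00164 — 8 statements merged into one kernel-verified Lean document; each statement's English description precedes it below -/
import Mathlib

section
/- For every exo-free policy π : S → PMF A, every k ≥ 1, every latent state (s,e) ∈ S × E, every action a ∈ A, and every (s',e') ∈ S × E, the k-step joint kernel factorizes as a product of the controller and exogenous k-step kernels: Pz^k((s,e),a)((s',e')) = Ps^k(s,a)(s') * Te^k(e)(e'). -/
open scoped ENNReal BigOperators

/-- The `k`-step controller kernel (index `k : ℕ` represents `k+1` steps):
`Psk Ts π 0 = Ts` (one step) and
`Psk Ts π (k+1) s a = (Ts s a).bind (fun s1 => (π s1).bind (fun a1 => Psk Ts π k s1 a1))`. -/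
noncomputable def Psk {S A : Type*} (Ts : S → A → PMF S) (π : S → PMF A) :
    ℕ → S → A → PMF S
  | 0 => Ts
  | k + 1 => fun s a => (Ts s a).bind fun s1 => (π s1).bind fun a1 => Psk Ts π k s1 a1

/-- The `k`-step exogenous kernel (index `k : ℕ` represents `k+1` steps). -/
noncomputable def Tek {E : Type*} (Te : E → PMF E) : ℕ → E → PMF E
  | 0 => Te
  | k + 1 => fun e => (Te e).bind (Tek Te k)

/-- The `k`-step joint kernel (index `k : ℕ` represents `k+1` steps). -/
noncomputable def Pzk {S E A : Type*} (T : S × E → A → PMF (S × E)) (π : S → PMF A) :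
    ℕ → S × E → A → PMF (S × E)
  | 0 => T
  | k + 1 => fun z a => (T z a).bind fun z1 => (π z1.1).bind fun a1 => Pzk T π k z1 a1

/-- For every exo-free policy `π`, every `k ≥ 1` (here `k+1` with `k : ℕ`), every latent state
`(s, e)`, action `a`, and `(s', e')`, the `k`-step joint kernel factorizes as the product of
the controller and exogenous `k`-step kernels. -/
theorem multi_step_joint_kernel_factorizes
    {S E A : Type*} [Fintype S] [Fintype E] [Fintype A]
    [Nonempty S] [Nonempty E] [Nonempty A]
    (Ts : S → A → PMF S) (Te : E → PMF E)
    (T : S × E → A → PMF (S × E))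
    (hT : ∀ (s : S) (e : E) (a : A) (s' : S) (e' : E),
      T (s, e) a (s', e') = Ts s a s' * Te e e')
    (π : S → PMF A) (k : ℕ) (s : S) (e : E) (a : A) (s' : S) (e' : E) :
    Pzk T π k (s, e) a (s', e') = Psk Ts π k s a s' * Tek Te k e e' := by
  induction k generalizing s e a with
  | zero => simpa [Pzk, Psk, Tek] using hT s e a s' e'
  | succ k ih =>
    simp only [Pzk, Psk, Tek, PMF.bind_apply]
    rw [ENNReal.tsum_prod']
    have key : ∀ (s1 : S) (e1 : E),
        (∑' a1, π s1 a1 * Pzk T π k (s1, e1) a1 (s', e'))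
          = (∑' a1, π s1 a1 * Psk Ts π k s1 a1 s') * Tek Te k e1 e' := by
      intro s1 e1
      simp only [ih, ← mul_assoc]
      exact ENNReal.tsum_mul_right
    calc (∑' s1, ∑' e1, T (s, e) a (s1, e1) *
            ∑' a1, π (s1, e1).1 a1 * Pzk T π k (s1, e1) a1 (s', e'))
        = ∑' s1, ∑' e1, (Ts s a s1 * (∑' a1, π s1 a1 * Psk Ts π k s1 a1 s')) *
            (Te e e1 * Tek Te k e1 e') := by
          refine tsum_congr fun s1 => tsum_congr fun e1 => ?_
          rw [hT, key]; ring
      _ = (∑' s1, Ts s a s1 * ∑' a1, π s1 a1 * Psk Ts π k s1 a1 s') *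
            ∑' e1, Te e e1 * Tek Te k e1 e' := by
          rw [← ENNReal.tsum_mul_right]
          exact tsum_congr fun s1 => ENNReal.tsum_mul_left
end

section
/- For every exo-free policy π : S → PMF A, every k ≥ 1, every latent state (s,e) ∈ S × E and every action a ∈ A: the E-marginal of Pz^k((s,e),a) equals Te^k(e) (the exogenous chain evolves autonomously, independently of the controller state and the action), and the S-marginal of Pz^k((s,e),a) equals Ps^k(s,a) (the controller chain does not depend on the exogenous state). -/
open scoped ENNReal BigOperators

private lemma pzk_prod {S E A : Type*}
    (Ts : S → A → PMF S) (Te : E → PMF E)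
    (T : S × E → A → PMF (S × E))
    (hT : ∀ (s : S) (e : E) (a : A) (s' : S) (e' : E),
      T (s, e) a (s', e') = Ts s a s' * Te e e')
    (π : S → PMF A) :
    ∀ (k : ℕ) (s : S) (e : E) (a : A) (s' : S) (e' : E),
      Pzk T π k (s, e) a (s', e') = Psk Ts π k s a s' * Tek Te k e e' := by
  intro k
  induction k with
  | zero => intro s e a s' e'; exact hT s e a s' e'
  | succ k ih =>
    intro s e a s' e'
    simp only [Pzk, Psk, Tek, PMF.bind_apply]
    rw [Summable.tsum_prod' ENNReal.summable (fun _ => ENNReal.summable)]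
    have h1 : ∀ s1 : S, ∀ e1 : E,
        T (s, e) a (s1, e1) * ∑' a1, π s1 a1 * Pzk T π k (s1, e1) a1 (s', e')
        = (Ts s a s1 * ∑' a1, π s1 a1 * Psk Ts π k s1 a1 s')
          * (Te e e1 * Tek Te k e1 e') := by
      intro s1 e1
      rw [hT s e a s1 e1]
      have : (∑' a1, π s1 a1 * Pzk T π k (s1, e1) a1 (s', e'))
          = (∑' a1, π s1 a1 * Psk Ts π k s1 a1 s') * Tek Te k e1 e' := by
        rw [← ENNReal.tsum_mul_right]
        exact tsum_congr fun a1 => by rw [ih s1 e1 a1 s' e']; ring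
      rw [this]; ring
    calc (∑' s1, ∑' e1, T (s, e) a (s1, e1)
            * ∑' a1, π s1 a1 * Pzk T π k (s1, e1) a1 (s', e'))
        = ∑' s1, (Ts s a s1 * ∑' a1, π s1 a1 * Psk Ts π k s1 a1 s')
            * ∑' e1, Te e e1 * Tek Te k e1 e' := by
          refine tsum_congr fun s1 => ?_
          rw [← ENNReal.tsum_mul_left]
          exact tsum_congr fun e1 => h1 s1 e1
      _ = (∑' s1, Ts s a s1 * ∑' a1, π s1 a1 * Psk Ts π k s1 a1 s')
            * ∑' e1, Te e e1 * Tek Te k e1 e' := ENNReal.tsum_mul_right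

/-- For every exo-free policy `π`, every `k ≥ 1` (here `k+1` with `k : ℕ`), every latent state
`(s, e)` and action `a`: the `E`-marginal of the `k`-step joint kernel equals the `k`-step
exogenous kernel `Tek Te k e` (the exogenous chain evolves autonomously, independent of the
controller state and the action), and the `S`-marginal equals the `k`-step controller kernel
`Psk Ts π k s a` (the controller chain does not depend on the exogenous state). -/
theorem multi_step_joint_kernel_marginals
    {S E A : Type*} [Fintype S] [Fintype E] [Fintype A]
    [Nonempty S] [Nonempty E] [Nonempty A]
    (Ts : S → A → PMF S) (Te : E → PMF E)
    (T : S × E → A → PMF (S × E))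
    (hT : ∀ (s : S) (e : E) (a : A) (s' : S) (e' : E),
      T (s, e) a (s', e') = Ts s a s' * Te e e')
    (π : S → PMF A) (k : ℕ) (s : S) (e : E) (a : A) :
    (Pzk T π k (s, e) a).map Prod.snd = Tek Te k e ∧
    (Pzk T π k (s, e) a).map Prod.fst = Psk Ts π k s a := by
  classical
  have key := pzk_prod Ts Te T hT π k
  constructor
  · ext e'
    rw [PMF.map_apply]
    have : (∑' z : S × E, if e' = z.2 then Pzk T π k (s, e) a z else 0)
        = ∑' s' : S, Pzk T π k (s, e) a (s', e') := by
      rw [Summable.tsum_prod' ENNReal.summable (fun _ => ENNReal.summable)]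
      refine tsum_congr fun s' => ?_
      rw [tsum_eq_single e' (fun b hb => by simp [Ne.symm hb])]
      simp
    rw [this]
    calc (∑' s' : S, Pzk T π k (s, e) a (s', e'))
        = ∑' s' : S, Psk Ts π k s a s' * Tek Te k e e' := by
          exact tsum_congr fun s' => key s e a s' e'
      _ = (∑' s' : S, Psk Ts π k s a s') * Tek Te k e e' := ENNReal.tsum_mul_right
      _ = Tek Te k e e' := by rw [(Psk Ts π k s a).tsum_coe, one_mul]
  · ext s'
    rw [PMF.map_apply]
    have : (∑' z : S × E, if s' = z.1 then Pzk T π k (s, e) a z else 0)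
        = ∑' e' : E, Pzk T π k (s, e) a (s', e') := by
      rw [Summable.tsum_prod' ENNReal.summable (fun _ => ENNReal.summable)]
      rw [tsum_eq_single s' (fun b hb => by simp [Ne.symm hb])]
      simp
    rw [this]
    calc (∑' e' : E, Pzk T π k (s, e) a (s', e'))
        = ∑' e' : E, Psk Ts π k s a s' * Tek Te k e e' := by
          exact tsum_congr fun e' => key s e a s' e'
      _ = Psk Ts π k s a s' * ∑' e' : E, Tek Te k e e' := ENNReal.tsum_mul_left
      _ = Psk Ts π k s a s' := by rw [(Tek Te k e).tsum_coe, mul_one]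
end

section
/- Observation-level k-step factorization: for every exo-free policy π : S → PMF A, every k ≥ 1, every latent state z = (s,e) ∈ Z, every action a ∈ A and every observation x' ∈ X, the probability of observing x' after k steps factorizes as ((Pz^k(z,a)).bind(q))(x') = q(ψ(x'))(x') * Ps^k(s,a)(φ⋆(x')) * Te^k(e)(φe(x')). -/
open scoped ENNReal BigOperators

lemma joint_fact {S E A : Type*} [Fintype S] [Fintype E] [Fintype A]
    (Ts : S → A → PMF S) (Te : E → PMF E)
    (T : S × E → A → PMF (S × E))
    (hT : ∀ (s : S) (e : E) (a : A) (s' : S) (e' : E),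
      T (s, e) a (s', e') = Ts s a s' * Te e e')
    (π : S → PMF A) :
    ∀ (k : ℕ) (s : S) (e : E) (a : A) (s' : S) (e' : E),
      Pzk T π k (s, e) a (s', e') = Psk Ts π k s a s' * Tek Te k e e' := by
  intro k
  induction k with
  | zero => intro s e a s' e'; exact hT s e a s' e'
  | succ k ih =>
    intro s e a s' e'
    simp only [Pzk, Psk, Tek, PMF.bind_apply, tsum_fintype]
    rw [Fintype.sum_prod_type, Finset.sum_mul_sum]
    refine Finset.sum_congr rfl fun s1 _ => Finset.sum_congr rfl fun e1 _ => ?_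
    have h : ∀ a1 : A, π s1 a1 * Pzk T π k (s1, e1) a1 (s', e')
        = (π s1 a1 * Psk Ts π k s1 a1 s') * Tek Te k e1 e' := by
      intro a1; rw [ih]; ring
    simp only [h, ← Finset.sum_mul]
    rw [hT]
    ring

/-- Observation-level `k`-step factorization: for every exo-free policy `π`, every `k ≥ 1`
(here `k+1` with `k : ℕ`), every latent state `z = (s, e)`, action `a` and observation `x'`,
the probability of observing `x'` after `k` steps factorizes as
`q(ψ x') x' * Psk Ts π k s a (φ⋆ x') * Tek Te k e (φe x')`,
where `φ⋆ x' = (ψ x').1` and `φe x' = (ψ x').2`. -/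
theorem observation_level_multi_step_factorization
    {S E A X : Type*} [Fintype S] [Fintype E] [Fintype A] [Fintype X]
    [Nonempty S] [Nonempty E] [Nonempty A] [Nonempty X]
    (Ts : S → A → PMF S) (Te : E → PMF E)
    (T : S × E → A → PMF (S × E))
    (hT : ∀ (s : S) (e : E) (a : A) (s' : S) (e' : E),
      T (s, e) a (s', e') = Ts s a s' * Te e e')
    (π : S → PMF A)
    (q : S × E → PMF X)
    (hq : ∀ z z' : S × E, z ≠ z' → Disjoint (q z).support (q z').support)
    (ψ : X → S × E)
    (hψ : ∀ (z : S × E) (x : X), x ∈ (q z).support → ψ x = z)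
    (k : ℕ) (s : S) (e : E) (a : A) (x' : X) :
    ((Pzk T π k (s, e) a).bind q) x' =
      q (ψ x') x' * Psk Ts π k s a (ψ x').1 * Tek Te k e (ψ x').2 := by
  rw [PMF.bind_apply, tsum_fintype]
  rw [Finset.sum_eq_single (ψ x')]
  · rw [show Pzk T π k (s, e) a (ψ x') = Pzk T π k (s, e) a ((ψ x').1, (ψ x').2) by rw [Prod.mk.eta],
      joint_fact Ts Te T hT π]
    ring
  · intro z _ hz
    have : q z x' = 0 := by
      by_contra h
      exact hz ((hψ z x' h).symm ▸ rfl)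
    rw [this, mul_zero]
  · intro h; exact absurd (Finset.mem_univ _) h
end

section
/- Equivalence of the multi-step inverse model and behavior cloning under a fixed deterministic exo-free policy: suppose the exo-free policy is deterministic, i.e. π(s) = PMF.pure(â(s)) for some function â : S → A. Then for every initial distribution μ0 : PMF Z, every k ≥ 1, all observations x, x' ∈ X and every action a ∈ A with Σ_{a''∈A} μ^k(x, a'', x') > 0, one has μ^k(x, a, x') / Σ_{a''∈A} μ^k(x, a'', x') = 1 if a = â(φ⋆(x)) and = 0 otherwise. Consequently the multi-step inverse conditional P(a_t = a | x_t = x, x_{t+k} = x') coincides with the behavior-cloning conditional P(a_t = a | x_t = x), which also equals the indicator of a = â(φ⋆(x)). -/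
open scoped ENNReal BigOperators

/-- The joint PMF `μ^k` on `X × A × X` of the triple `(x_t, a_t, x_{t+k})`:
sample `z ~ μ0`, `x ~ q z`, `a ~ π (φ⋆ x)`, `z' ~ Pzk T π k z a`, `x' ~ q z'`. -/
noncomputable def muk {S E A X : Type*} (T : S × E → A → PMF (S × E)) (π : S → PMF A)
    (q : S × E → PMF X) (ψ : X → S × E) (μ0 : PMF (S × E)) (k : ℕ) :
    PMF (X × A × X) :=
  μ0.bind fun z => (q z).bind fun x => (π (ψ x).1).bind fun a =>
    (Pzk T π k z a).bind fun z' => (q z').map fun x' => (x, a, x')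

private lemma muk_eq_zero_of_ne {S E A X : Type*}
    (T : S × E → A → PMF (S × E)) (π : S → PMF A) (ahat : S → A)
    (hdet : ∀ s : S, π s = PMF.pure (ahat s))
    (q : S × E → PMF X) (ψ : X → S × E) (μ0 : PMF (S × E)) (k : ℕ)
    (x x' : X) (a : A) (h : a ≠ ahat (ψ x).1) :
    muk T π q ψ μ0 k (x, a, x') = 0 := by
  simp only [muk, PMF.bind_apply]
  refine ENNReal.tsum_eq_zero.2 fun z => mul_eq_zero_of_right _ ?_
  refine ENNReal.tsum_eq_zero.2 fun x0 => ?_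
  by_cases hx : x0 = x
  · subst hx
    refine mul_eq_zero_of_right _ (ENNReal.tsum_eq_zero.2 fun a0 => ?_)
    by_cases ha : a0 = a
    · subst ha
      refine mul_eq_zero_of_left ?_ _
      rw [hdet, PMF.pure_apply, if_neg h]
    · refine mul_eq_zero_of_right _ (ENNReal.tsum_eq_zero.2 fun z' => ?_)
      refine mul_eq_zero_of_right _ ?_
      rw [PMF.map_apply]
      refine ENNReal.tsum_eq_zero.2 fun x1 => ?_
      rw [if_neg]
      intro hcon
      exact ha (Prod.ext_iff.1 (Prod.ext_iff.1 hcon).2).1.symm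
  · refine mul_eq_zero_of_right _ (ENNReal.tsum_eq_zero.2 fun a0 => ?_)
    refine mul_eq_zero_of_right _ (ENNReal.tsum_eq_zero.2 fun z' => ?_)
    refine mul_eq_zero_of_right _ ?_
    rw [PMF.map_apply]
    refine ENNReal.tsum_eq_zero.2 fun x1 => ?_
    rw [if_neg]
    intro hcon
    exact hx ((Prod.ext_iff.1 hcon).1).symm

/-- Under a fixed deterministic exo-free policy `π s = PMF.pure (â s)`, the multi-step inverse
conditional `P(a_t = a | x_t = x, x_{t+k} = x')` equals the indicator of `a = â (φ⋆ x)`, and it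
coincides with the behavior-cloning conditional `P(a_t = a | x_t = x)`, which also equals the
same indicator (here `φ⋆ x = (ψ x).1`). -/
theorem multi_step_inverse_eq_behavior_cloning_of_deterministic_policy
    {S E A X : Type*} [Fintype S] [Fintype E] [Fintype A] [Fintype X]
    [Nonempty S] [Nonempty E] [Nonempty A] [Nonempty X] [DecidableEq A]
    (Ts : S → A → PMF S) (Te : E → PMF E)
    (T : S × E → A → PMF (S × E))
    (hT : ∀ (s : S) (e : E) (a : A) (s' : S) (e' : E),
      T (s, e) a (s', e') = Ts s a s' * Te e e')
    (π : S → PMF A) (ahat : S → A)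
    (hdet : ∀ s : S, π s = PMF.pure (ahat s))
    (q : S × E → PMF X)
    (hq : ∀ z z' : S × E, z ≠ z' → Disjoint (q z).support (q z').support)
    (ψ : X → S × E)
    (hψ : ∀ (z : S × E) (x : X), x ∈ (q z).support → ψ x = z)
    (μ0 : PMF (S × E)) (k : ℕ) (x x' : X) (a : A)
    (hpos : 0 < ∑ a'' : A, muk T π q ψ μ0 k (x, a'', x')) :
    (muk T π q ψ μ0 k (x, a, x')) / (∑ a'' : A, muk T π q ψ μ0 k (x, a'', x')) =
        (if a = ahat (ψ x).1 then 1 else 0) ∧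
    (∑ x'' : X, muk T π q ψ μ0 k (x, a, x'')) /
        (∑ a'' : A, ∑ x'' : X, muk T π q ψ μ0 k (x, a'', x'')) =
        (if a = ahat (ψ x).1 then 1 else 0) := by
  classical
  set b := ahat (ψ x).1 with hb
  have hzero : ∀ (x'' : X) (a'' : A), a'' ≠ b → muk T π q ψ μ0 k (x, a'', x'') = 0 :=
    fun x'' a'' h => muk_eq_zero_of_ne T π ahat hdet q ψ μ0 k x x'' a'' h
  have hsum1 : ∀ x'' : X, (∑ a'' : A, muk T π q ψ μ0 k (x, a'', x'')) =
      muk T π q ψ μ0 k (x, b, x'') := by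
    intro x''
    refine Finset.sum_eq_single b (fun a'' _ h => hzero x'' a'' h) (by simp)
  have hN : muk T π q ψ μ0 k (x, b, x') ≠ 0 := by
    intro h0
    rw [hsum1 x', h0] at hpos
    exact lt_irrefl _ hpos
  have hNtop : muk T π q ψ μ0 k (x, b, x') ≠ ⊤ := PMF.apply_ne_top _ _
  have hM : (∑ x'' : X, muk T π q ψ μ0 k (x, b, x'')) ≠ 0 := by
    intro h0
    have hle : muk T π q ψ μ0 k (x, b, x') ≤ ∑ x'' : X, muk T π q ψ μ0 k (x, b, x'') :=
      Finset.single_le_sum (f := fun x'' => muk T π q ψ μ0 k (x, b, x''))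
        (fun i _ => zero_le) (Finset.mem_univ x')
    exact hN (le_antisymm (h0 ▸ hle) zero_le)
  have hMtop : (∑ x'' : X, muk T π q ψ μ0 k (x, b, x'')) ≠ ⊤ := by
    refine (ENNReal.sum_lt_top.2 fun i _ => ?_).ne
    exact (PMF.apply_ne_top _ _).lt_top
  constructor
  · rw [hsum1 x']
    by_cases h : a = b
    · subst h
      simp [ENNReal.div_self hN hNtop]
    · rw [hzero x' a h, if_neg h, ENNReal.zero_div]
  · have hdsum : (∑ a'' : A, ∑ x'' : X, muk T π q ψ μ0 k (x, a'', x'')) =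
        ∑ x'' : X, muk T π q ψ μ0 k (x, b, x'') := by
      rw [Finset.sum_comm]
      exact Finset.sum_congr rfl fun x'' _ => hsum1 x''
    rw [hdsum]
    by_cases h : a = b
    · subst h
      simp [ENNReal.div_self hM hMtop]
    · rw [if_neg h]
      have : (∑ x'' : X, muk T π q ψ μ0 k (x, a, x'')) = 0 :=
        Finset.sum_eq_zero fun x'' _ => hzero x'' a h
      rw [this, ENNReal.zero_div]
end

section
/- The agent-controller representation is Bellman complete: if f : Z × A → ℝ satisfies f((s,e),a) = Q(s,a) for some Q : S × A → ℝ and all s ∈ S, e ∈ E, a ∈ A, then there exists Q' : S × A → ℝ such that (𝒯f)((s,e),a) = Q'(s,a) for all s ∈ S, e ∈ E, a ∈ A; that is, the class of Q-functions on Z × A that depend only on the controller component of the latent state is closed under the Bellman operator 𝒯. -/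
open scoped ENNReal BigOperators

/-- The Bellman operator on Q-functions over `Z × A` with `Z = S × E`:
`(𝒯 f)(z, a) = R (z.1, a) + ∑ z', (T z a z').toReal * max_{a'} f (z', a')`. -/
noncomputable def bellman {S E A : Type*} [Fintype S] [Fintype E] [Fintype A] [Nonempty A]
    (T : S × E → A → PMF (S × E)) (R : S × A → ℝ)
    (f : (S × E) × A → ℝ) : (S × E) × A → ℝ :=
  fun za => R (za.1.1, za.2) +
    ∑ z' : S × E, (T za.1 za.2 z').toReal *
      (Finset.univ.sup' Finset.univ_nonempty fun a' : A => f (z', a'))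

/-- The agent-controller representation is Bellman complete: the class of Q-functions on
`Z × A` that depend only on the controller component of the latent state is closed under the
Bellman operator. -/
theorem acro_representation_bellman_complete
    {S E A : Type*} [Fintype S] [Fintype E] [Fintype A]
    [Nonempty S] [Nonempty E] [Nonempty A]
    (Ts : S → A → PMF S) (Te : E → PMF E)
    (T : S × E → A → PMF (S × E))
    (hT : ∀ (s : S) (e : E) (a : A) (s' : S) (e' : E),
      T (s, e) a (s', e') = Ts s a s' * Te e e')
    (R : S × A → ℝ)
    (f : (S × E) × A → ℝ) (Q : S × A → ℝ)
    (hf : ∀ (s : S) (e : E) (a : A), f ((s, e), a) = Q (s, a)) :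
    ∃ Q' : S × A → ℝ, ∀ (s : S) (e : E) (a : A),
      bellman T R f ((s, e), a) = Q' (s, a) := by
  refine ⟨fun sa => R sa + ∑ s' : S, (Ts sa.1 sa.2 s').toReal *
    (Finset.univ.sup' Finset.univ_nonempty fun a' : A => Q (s', a')), fun s e a => ?_⟩
  unfold bellman
  simp only
  congr 1
  rw [Fintype.sum_prod_type]
  refine Finset.sum_congr rfl fun s' _ => ?_
  have hsum : ∑ e' : E, (Te e e').toReal = 1 := by
    rw [← ENNReal.toReal_sum (fun _ _ => PMF.apply_ne_top _ _)]
    have : ∑ e' : E, Te e e' = 1 := by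
      rw [← tsum_fintype (L := SummationFilter.unconditional E)]; exact (Te e).tsum_coe
    simp [this]
  have hsup : ∀ e' : E,
      (Finset.univ.sup' Finset.univ_nonempty fun a' : A => f ((s', e'), a')) =
      (Finset.univ.sup' Finset.univ_nonempty fun a' : A => Q (s', a')) := by
    intro e'; congr 1; funext a'; exact hf s' e' a'
  calc ∑ e' : E, (T (s, e) a (s', e')).toReal *
        (Finset.univ.sup' Finset.univ_nonempty fun a' : A => f ((s', e'), a'))
      = ∑ e' : E, (Ts s a s').toReal * (Te e e').toReal *
        (Finset.univ.sup' Finset.univ_nonempty fun a' : A => Q (s', a')) := by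
        refine Finset.sum_congr rfl fun e' _ => ?_
        rw [hT, ENNReal.toReal_mul, hsup]
    _ = (Ts s a s').toReal *
        (Finset.univ.sup' Finset.univ_nonempty fun a' : A => Q (s', a')) := by
        rw [← Finset.sum_mul, ← Finset.mul_sum, hsum, mul_one]
end

section
/- Exogenous information may violate Bellman completeness: there exists a first-coordinate-measurable function f : X → ℝ (namely f(b1,b2) = if b1 then 1 else 0) such that its Bellman backup 𝒯f = f ∘ step is not first-coordinate-measurable (indeed (𝒯f)(b1,b2) = if xor b1 b2 then 1 else 0, and (𝒯f)(true,true) ≠ (𝒯f)(true,false)). Hence the class of first-coordinate-measurable functions, i.e. the Q-function class built on the representation φ(b1,b2) = b1, is not closed under the Bellman operator, even though this representation refines the trivial agent-controller representation of this action-free, fully exogenous system. -/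
/-- The deterministic single-action transition on `Bool × Bool`:
`step (b1, b2) = (xor b1 b2, b2)`. -/
def step : Bool × Bool → Bool × Bool :=
  fun p => (xor p.1 p.2, p.2)

/-- A function `f : Bool × Bool → ℝ` is first-coordinate-measurable if it does not depend on
the second coordinate. -/
def FirstCoordMeasurable (f : Bool × Bool → ℝ) : Prop :=
  ∀ b1 b2 b2' : Bool, f (b1, b2) = f (b1, b2')

/-- Exogenous information may violate Bellman completeness: there exists a
first-coordinate-measurable `f : Bool × Bool → ℝ` (namely `f (b1, b2) = if b1 then 1 else 0`)
whose Bellman backup `𝒯 f = f ∘ step` (the reward is identically `0` and there is a single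
action) is not first-coordinate-measurable; indeed `(𝒯 f)(b1, b2) = if xor b1 b2 then 1 else 0`
and `(𝒯 f)(true, true) ≠ (𝒯 f)(true, false)`. Hence the class of first-coordinate-measurable
functions is not closed under the Bellman operator. -/
theorem exogenous_info_may_violate_bellman_completeness :
    ∃ f : Bool × Bool → ℝ,
      (∀ b1 b2 : Bool, f (b1, b2) = if b1 then 1 else 0) ∧
      FirstCoordMeasurable f ∧
      ¬ FirstCoordMeasurable (f ∘ step) ∧
      (∀ b1 b2 : Bool, (f ∘ step) (b1, b2) = if xor b1 b2 then 1 else 0) ∧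
      (f ∘ step) (true, true) ≠ (f ∘ step) (true, false) := by
  refine ⟨fun p => if p.1 then 1 else 0, fun _ _ => rfl, fun _ _ _ => rfl, ?_, fun _ _ => rfl, by norm_num [step]⟩
  intro h
  have := h true true false
  norm_num [step] at this
end

section
/- A one-step inverse model built on the collapsing representation achieves zero loss: there exists a function g : X × X → A such that for every non-terminal state s ∈ {s0, s1, s2, s3} and every action a ∈ A, g(φ(s), φ(δ(s,a))) = a; that is, the action taken is perfectly determined by the pair of representations of the current and next states, even though φ identifies s0 with s2 and s1 with s3. -/
/-- The states of the counterexample MDP (`sf` is terminal). -/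
inductive St : Type
  | s0 | s1 | s2 | s3 | sf
  deriving DecidableEq

/-- The actions of the counterexample MDP. -/
inductive Ac : Type
  | a0 | a1 | a2
  deriving DecidableEq

open St Ac

/-- The deterministic transition function: `a0` stays put on non-terminal states, `a1` cycles
`s0 → s1 → s2 → s3 → s0`, `a2` terminates, and `sf` is absorbing. -/
def tr : St → Ac → St
  | sf, _ => sf
  | _, a2 => sf
  | s, a0 => s
  | s0, a1 => s1
  | s1, a1 => s2
  | s2, a1 => s3
  | s3, a1 => s0

/-- The reward function: `1` for taking `a2` in `s2`, and `0` otherwise. -/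
def rew : St → Ac → ℝ
  | s2, a2 => 1
  | _, _ => 0

/-- The representation space. -/
inductive Ob : Type
  | x0 | x1 | xf
  deriving DecidableEq

open Ob

/-- The collapsing representation: `φ s0 = φ s2 = x0`, `φ s1 = φ s3 = x1`, `φ sf = xf`. -/
def phi : St → Ob
  | s0 => x0
  | s2 => x0
  | s1 => x1
  | s3 => x1
  | sf => xf

/-- A one-step inverse model built on the collapsing representation achieves zero loss:
there exists `g : Ob × Ob → Ac` such that for every non-terminal state `s` and every action
`a`, `g (φ s, φ (δ s a)) = a`. -/
theorem one_step_inverse_model_zero_loss :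
    ∃ g : Ob × Ob → Ac, ∀ s : St, s ≠ sf → ∀ a : Ac,
      g (phi s, phi (tr s a)) = a := by
  refine ⟨fun p => match p with
    | (_, xf) => a2
    | (x0, x1) => a1
    | (x1, x0) => a1
    | _ => a0, ?_⟩
  intro s hs a
  cases s <;> cases a <;> first | rfl | exact absurd rfl hs
end

section
/- A two-step inverse model rules out collapsing s0 and s2: for every type X' and every function φ' : S → X' with φ'(s0) = φ'(s2), there is no function g : X' × X' → A such that g(φ'(s), φ'(δ(δ(s,a), a'))) = a for all s ∈ {s0, s1, s2, s3} and all a, a' ∈ A with δ(s,a) ≠ sf. (The two-step segments s0 →a0 s0 →a0 s0 and s0 →a1 s1 →a1 s2 have the same representation pair but different first actions a0 ≠ a1.) -/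
open St Ac

/-- A two-step inverse model rules out collapsing `s0` and `s2`: for every type `X'` and every
representation `φ' : St → X'` with `φ' s0 = φ' s2`, there is no `g : X' × X' → Ac` such that
`g (φ' s, φ' (δ (δ s a) a')) = a` for all non-terminal `s` and all actions `a, a'` with
`δ s a ≠ sf`. -/
theorem two_step_inverse_model_rules_out_collapse
    (X' : Type*) (phi' : St → X') (hcollapse : phi' s0 = phi' s2) :
    ¬ ∃ g : X' × X' → Ac, ∀ (s : St) (a a' : Ac),
        s ≠ sf → tr s a ≠ sf → g (phi' s, phi' (tr (tr s a) a')) = a := by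
  rintro ⟨g, hg⟩
  have h0 := hg s0 a0 a0 (by simp) (by decide)
  have h1 := hg s0 a1 a1 (by simp) (by decide)
  simp only [tr] at h0 h1
  rw [← hcollapse] at h1
  exact absurd (h0.symm.trans h1) (by decide)
end
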